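/- arXiv:1611.02021 — 4 statements merged into one kernel-verified Lean document; each statement's English description precedes it below -/
import Mathlib

section
/- Let X be a nonempty subset of {0,1}^k and let n ≥ k. Then there exists a weight function w assigning a nonnegative integer to each isometric copy of X in {0,1}^n such that every element of {0,1}^n has total multiplicity (sum of weights of the copies containing it) exactly equal to |X|. -/
theorem stmt_2 (k n : ℕ) (hkn : k ≤ n) (X : Finset (Fin k → ZMod 2)) (hX : X.Nonempty) :
    ∃ w : Finset (Fin n → ZMod 2) → ℕ,
      (∀ A, w A ≠ 0 → ∃ φ : (Fin k → ZMod 2) → (Fin n → ZMod 2),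
        (∀ a b, hammingDist (φ a) (φ b) = hammingDist a b) ∧ X.image φ = A) ∧
      (∀ x : Fin n → ZMod 2,
        ∑ A ∈ Finset.univ.filter (fun A : Finset (Fin n → ZMod 2) => x ∈ A), w A = X.card) := by
  classical
  set ext : (Fin k → ZMod 2) → (Fin n → ZMod 2) := fun a i =>
    if h : (i : ℕ) < k then a ⟨i, h⟩ else 0 with hext
  have ext_inj : Function.Injective ext := by
    intro a b hab
    funext j
    have := congrFun hab ⟨j, lt_of_lt_of_le j.2 hkn⟩
    simpa [hext, j.2] using this
  have ext_iso : ∀ a b, hammingDist (ext a) (ext b) = hammingDist a b := by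
    intro a b
    simp only [hammingDist]
    refine (Finset.card_bij' (fun i _ => Fin.castLE hkn i) (fun i hi =>
      ⟨i, by
        simp only [Finset.mem_filter, Finset.mem_univ, true_and] at hi
        by_contra h
        exact hi (by simp [hext, h])⟩) ?_ ?_ ?_ ?_).symm
    · intro i hi
      simp only [Finset.mem_filter, Finset.mem_univ, true_and] at hi ⊢
      simpa [hext, Fin.castLE, i.2] using hi
    · intro i hi
      simp only [Finset.mem_filter, Finset.mem_univ, true_and] at hi ⊢
      have hlt : (i : ℕ) < k := by
        by_contra h
        exact hi (by simp [hext, h])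
      simpa [hext, hlt] using hi
    · intro i hi; rfl
    · intro i hi
      simp only [Finset.mem_filter, Finset.mem_univ, true_and] at hi
      have hlt : (i : ℕ) < k := by
        by_contra h
        exact hi (by simp [hext, h])
      ext; rfl
  set f : (Fin n → ZMod 2) → Finset (Fin n → ZMod 2) :=
    fun t => X.image (fun a => t + ext a) with hf
  refine ⟨fun A => (Finset.univ.filter (fun t => f t = A)).card, ?_, ?_⟩
  · intro A hA
    obtain ⟨t, ht⟩ := Finset.card_ne_zero.mp hA
    rw [Finset.mem_filter] at ht
    refine ⟨fun a => t + ext a, fun a b => ?_, ht.2⟩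
    rw [← ext_iso a b]
    simp [hammingDist]
  · intro x
    have key : (Finset.univ.filter fun t => x ∈ f t).card = X.card := by
      have himg : (Finset.univ.filter fun t => x ∈ f t) =
          X.image (fun a => x - ext a) := by
        ext t
        simp only [Finset.mem_filter, Finset.mem_univ, true_and, hf, Finset.mem_image]
        constructor
        · rintro ⟨a, ha, rfl⟩
          exact ⟨a, ha, by abel⟩
        · rintro ⟨a, ha, rfl⟩
          exact ⟨a, ha, by abel⟩
      rw [himg, Finset.card_image_of_injective _
        (fun a b hab => ext_inj (sub_right_injective hab))]
    rw [← key]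
    rw [Finset.card_eq_sum_card_fiberwise (f := f)
      (t := Finset.univ.filter (fun A : Finset (Fin n → ZMod 2) => x ∈ A))
      (fun t ht => by
        rw [Finset.mem_coe, Finset.mem_filter] at ht ⊢
        exact ⟨Finset.mem_univ _, ht.2⟩)]
    refine Finset.sum_congr rfl fun A hA => ?_
    rw [Finset.mem_filter] at hA
    refine congrArg Finset.card ?_
    ext t
    simp only [Finset.mem_filter, Finset.mem_univ, true_and]
    exact ⟨fun h => ⟨h ▸ hA.2, h⟩, And.right⟩
end

section
/- Let X be a nonempty subset of {0,1}^k and let r be a power of 2. Then there exists an integer n ≥ k such that there is a weight function assigning nonnegative integers to the isometric copies of X in {0,1}^n under which every element of {0,1}^n has multiplicity congruent to 1 modulo r. -/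
open Finset

namespace Stmt3Aux

abbrev Q (n : ℕ) := Fin n → ZMod 2

noncomputable def emb {k n : ℕ} (e : Fin k ↪ Fin n) (c : Q n) : Q k → Q n :=
  fun a => c + Function.extend e a 0

lemma emb_apply_mem {k n : ℕ} (e : Fin k ↪ Fin n) (c : Q n) (a : Q k) (j : Fin k) :
    emb e c a (e j) = c (e j) + a j := by
  simp [emb, e.injective.extend_apply]

lemma emb_apply_not_mem {k n : ℕ} (e : Fin k ↪ Fin n) (c : Q n) (a : Q k) (i : Fin n)
    (h : ¬∃ j, e j = i) : emb e c a i = c i := by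
  simp [emb, Function.extend_apply' _ _ _ h]

lemma emb_isometry {k n : ℕ} (e : Fin k ↪ Fin n) (c : Q n) (a b : Q k) :
    hammingDist (emb e c a) (emb e c b) = hammingDist a b := by
  unfold hammingDist
  rw [show (filter (fun i => emb e c a i ≠ emb e c b i) univ)
      = (filter (fun j => a j ≠ b j) univ).map e by
    ext i
    simp only [mem_filter, mem_univ, true_and, mem_map]
    by_cases h : ∃ j, e j = i
    · obtain ⟨j, rfl⟩ := h
      rw [emb_apply_mem, emb_apply_mem]
      constructor
      · intro hne
        refine ⟨j, fun hc => hne (by rw [hc]), rfl⟩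
      · rintro ⟨j', hj', hej⟩
        have hj : j' = j := e.injective hej
        subst hj
        intro hc
        exact hj' (add_left_cancel hc)
    · rw [emb_apply_not_mem _ _ _ _ h, emb_apply_not_mem _ _ _ _ h]
      constructor
      · intro hh; exact absurd rfl hh
      · rintro ⟨j, hj, hej⟩; exact absurd ⟨j, hej⟩ h]
  exact card_map e

/-- Achievability of a multiplicity function by weighted isometric copies of X. -/
def Ach (r k n : ℕ) (X : Finset (Q k)) (μ : Q n → ZMod r) : Prop :=
  ∃ W : (Fin k ↪ Fin n) × Q n → ZMod r,
    ∀ x, μ x = ∑ p : (Fin k ↪ Fin n) × Q n,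
      W p * (if x ∈ X.image (emb p.1 p.2) then 1 else 0)

lemma Ach.sub {r k n : ℕ} {X : Finset (Q k)} {μ ν : Q n → ZMod r}
    (h1 : Ach r k n X μ) (h2 : Ach r k n X ν) : Ach r k n X (μ - ν) := by
  obtain ⟨W1, hW1⟩ := h1
  obtain ⟨W2, hW2⟩ := h2
  refine ⟨W1 - W2, fun x => ?_⟩
  simp only [Pi.sub_apply, hW1 x, hW2 x, ← Finset.sum_sub_distrib, sub_mul]

lemma Ach.congr {r k n : ℕ} {X : Finset (Q k)} {μ ν : Q n → ZMod r}
    (h1 : Ach r k n X μ) (h : ∀ x, μ x = ν x) : Ach r k n X ν := by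
  obtain ⟨W, hW⟩ := h1
  exact ⟨W, fun x => (h x) ▸ hW x⟩

lemma ach_translates {r k : ℕ} (X : Finset (Q k)) (g : Q k → ZMod r) :
    Ach r k k X (fun x => ∑ a ∈ X, g (x + a)) := by
  classical
  refine ⟨fun p => if p.1 = Function.Embedding.refl (Fin k) then g p.2 else 0, fun x => ?_⟩
  rw [Fintype.sum_prod_type]
  have hcollapse : ∀ e : Fin k ↪ Fin k,
      (∑ c : Q k, (if e = Function.Embedding.refl (Fin k) then g c else 0)
        * (if x ∈ X.image (emb e c) then 1 else 0))
      = if e = Function.Embedding.refl (Fin k) then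
          (∑ c : Q k, g c * (if x ∈ X.image (emb e c) then 1 else 0)) else 0 := by
    intro e
    split <;> simp
  rw [Finset.sum_congr rfl (fun e _ => hcollapse e), Finset.sum_ite_eq' univ]
  rw [if_pos (mem_univ _)]
  have himg : ∀ c : Q k,
      (x ∈ X.image (emb (Function.Embedding.refl (Fin k)) c)) ↔ x + c ∈ X := by
    intro c
    simp only [mem_image]
    constructor
    · rintro ⟨a, ha, rfl⟩
      have h1 : emb (Function.Embedding.refl (Fin k)) c a = c + a := by
        funext i
        simpa using emb_apply_mem (Function.Embedding.refl (Fin k)) c a i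
      rw [h1]
      have h2 : c + a + c = a := by
        funext i
        simp only [Pi.add_apply]
        have hz : ∀ z w : ZMod 2, z + w + z = w := by decide
        exact hz (c i) (a i)
      rwa [h2]
    · intro hx
      refine ⟨x + c, hx, ?_⟩
      funext i
      have h1 : emb (Function.Embedding.refl (Fin k)) c (x + c) i = c i + (x i + c i) := by
        simpa using emb_apply_mem (Function.Embedding.refl (Fin k)) c (x + c) i
      rw [h1]
      have hz : ∀ z w : ZMod 2, z + (w + z) = w := by decide
      exact hz (c i) (x i)
  have hterm : ∀ c : Q k,
      g c * (if x ∈ X.image (emb (Function.Embedding.refl (Fin k)) c) then 1 else 0)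
      = if x + c ∈ X then g c else 0 := by
    intro c
    rw [if_congr (himg c) rfl rfl]
    split <;> simp
  rw [Finset.sum_congr rfl (fun c _ => hterm c)]
  rw [← Equiv.sum_comp (Equiv.addLeft x) (fun c => if x + c ∈ X then g c else 0)]
  simp only [Equiv.coe_addLeft]
  have hxx : ∀ a : Q k, x + (x + a) = a := by
    intro a; funext i
    simp only [Pi.add_apply]
    have hz : ∀ z w : ZMod 2, z + (z + w) = w := by decide
    exact hz (x i) (a i)
  simp only [hxx]
  rw [Finset.sum_ite_mem, Finset.univ_inter]


lemma zmod2_add_self : ∀ z : ZMod 2, z + z = 0 := by decide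

lemma sum_symmDiff {α : Type*} [DecidableEq α] (S T : Finset α) (f : α → ZMod 2) :
    ∑ a ∈ S, f a + ∑ a ∈ T, f a = ∑ a ∈ (S \ T) ∪ (T \ S), f a := by
  have hS : ∑ a ∈ S, f a = ∑ a ∈ S \ T, f a + ∑ a ∈ S ∩ T, f a := by
    rw [← Finset.sum_union (Finset.disjoint_sdiff_inter S T), Finset.sdiff_union_inter]
  have hT : ∑ a ∈ T, f a = ∑ a ∈ T \ S, f a + ∑ a ∈ S ∩ T, f a := by
    rw [Finset.inter_comm,
      ← Finset.sum_union (Finset.disjoint_sdiff_inter T S), Finset.sdiff_union_inter]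
  have hdisj : Disjoint (S \ T) (T \ S) := by
    rw [Finset.disjoint_left]
    intro a ha hb
    rw [Finset.mem_sdiff] at ha hb
    exact hb.2 ha.1
  rw [hS, hT, Finset.sum_union hdisj]
  rw [show ∑ a ∈ S \ T, f a + ∑ a ∈ S ∩ T, f a + (∑ a ∈ T \ S, f a + ∑ a ∈ S ∩ T, f a)
    = ∑ a ∈ S \ T, f a + ∑ a ∈ T \ S, f a + (∑ a ∈ S ∩ T, f a + ∑ a ∈ S ∩ T, f a) by ring]
  rw [zmod2_add_self _, add_zero]

lemma tail_add {k : ℕ} (x y : Q (k + 1)) : Fin.tail (x + y) = Fin.tail x + Fin.tail y := rfl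

lemma sum_split {k : ℕ} {M : Type*} [AddCommMonoid M] (X : Finset (Q (k + 1)))
    (F : Q (k + 1) → M) :
    ∑ a ∈ X, F a
      = ∑ a' ∈ (X.filter (fun a => a 0 = 0)).image Fin.tail, F (Fin.cons 0 a')
      + ∑ a' ∈ (X.filter (fun a => a 0 = 1)).image Fin.tail, F (Fin.cons 1 a') := by
  classical
  have hinj : ∀ b : ZMod 2, ∀ a ∈ X.filter (fun a => a 0 = b),
      ∀ a'' ∈ X.filter (fun a => a 0 = b), Fin.tail a = Fin.tail a'' → a = a'' := by
    intro b a ha a'' ha'' ht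
    rw [Finset.mem_filter] at ha ha''
    rw [← Fin.cons_self_tail a, ← Fin.cons_self_tail a'', ht, ha.2, ha''.2]
  have h0 : ∑ a' ∈ (X.filter (fun a => a 0 = 0)).image Fin.tail, F (Fin.cons 0 a')
      = ∑ a ∈ X.filter (fun a => a 0 = 0), F a := by
    rw [Finset.sum_image (hinj 0)]
    refine Finset.sum_congr rfl fun a ha => ?_
    rw [Finset.mem_filter] at ha
    conv_rhs => rw [← Fin.cons_self_tail a, ha.2]
  have h1 : ∑ a' ∈ (X.filter (fun a => a 0 = 1)).image Fin.tail, F (Fin.cons 1 a')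
      = ∑ a ∈ X.filter (fun a => a 0 = 1), F a := by
    rw [Finset.sum_image (hinj 1)]
    refine Finset.sum_congr rfl fun a ha => ?_
    rw [Finset.mem_filter] at ha
    conv_rhs => rw [← Fin.cons_self_tail a, ha.2]
  rw [h0, h1]
  rw [show X.filter (fun a => a 0 = 1) = X.filter (fun a => ¬ a 0 = 0) by
    refine Finset.filter_congr fun a _ => ?_
    have : ∀ z : ZMod 2, z = 1 ↔ ¬ z = 0 := by decide
    exact iff_of_eq (by rw [eq_iff_iff]; exact this (a 0))]
  exact (Finset.sum_filter_add_sum_filter_not X _ F).symm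

/-- The key mod 2 covering lemma. -/
lemma mod2_lemma : ∀ (k : ℕ) (X : Finset (Q k)), X.Nonempty →
    ∃ g : Q k → ZMod 2, ∀ x, ∑ a ∈ X, g (x + a) = 1 := by
  intro k
  induction k with
  | zero =>
    intro X hX
    refine ⟨fun _ => 1, fun x => ?_⟩
    have h1 : X.card = 1 := by
      have hle : X.card ≤ 1 := by
        have := Finset.card_le_univ X
        simpa [Fintype.card_unique] using this
      have hpos : 0 < X.card := Finset.card_pos.mpr hX
      omega
    rw [Finset.sum_const, h1]
    simp
  | succ k ih =>
    intro X hX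
    set X0 := (X.filter (fun a => a 0 = 0)).image Fin.tail with hX0
    set X1 := (X.filter (fun a => a 0 = 1)).image Fin.tail with hX1
    by_cases heq : X0 = X1
    · -- equal slices case
      have hne : X0.Nonempty := by
        obtain ⟨a, ha⟩ := hX
        have : ∀ b : ZMod 2, b = 0 ∨ b = 1 := by decide
        rcases this (a 0) with h | h
        · exact ⟨Fin.tail a, Finset.mem_image_of_mem _ (Finset.mem_filter.mpr ⟨ha, h⟩)⟩
        · rw [heq]
          exact ⟨Fin.tail a, Finset.mem_image_of_mem _ (Finset.mem_filter.mpr ⟨ha, h⟩)⟩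
      obtain ⟨h, hh⟩ := ih X0 hne
      refine ⟨fun y => if y 0 = 1 then h (Fin.tail y) else 0, fun x => ?_⟩
      rw [sum_split X (fun (a : Q (k+1)) => (if (x + a) 0 = 1 then h (Fin.tail (x + a)) else 0))]
      rw [← hX0, ← hX1, ← heq]
      have hsimp : ∀ (b : ZMod 2) (a' : Q k),
          (if (x + (Fin.cons b a' : Q (k+1))) 0 = 1 then h (Fin.tail (x + (Fin.cons b a' : Q (k+1)))) else 0)
          = if x 0 + b = 1 then h (Fin.tail x + a') else 0 := by
        intro b a'
        have hhead : (x + (Fin.cons b a' : Q (k+1))) 0 = x 0 + b := by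
          simp [Fin.cons_zero]
        have htail : Fin.tail (x + (Fin.cons b a' : Q (k+1))) = Fin.tail x + a' := by
          rw [tail_add, Fin.tail_cons]
        rw [hhead, htail]
      simp only [hsimp]
      have hz : ∀ z : ZMod 2, z = 0 ∨ z = 1 := by decide
      rcases hz (x 0) with h0 | h0 <;> rw [h0]
      · have e00 : (0:ZMod 2) + 0 = 1 ↔ False := by decide
        have e01 : (0:ZMod 2) + 1 = 1 ↔ True := by decide
        simp only [if_congr e00 rfl rfl, if_congr e01 rfl rfl, if_true, if_false]
        rw [Finset.sum_const_zero, zero_add]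
        exact hh (Fin.tail x)
      · have e1 : (1 : ZMod 2) + 1 = 1 ↔ False := by decide
        have e0 : (1 : ZMod 2) + 0 = 1 ↔ True := by decide
        simp only [if_congr e1 rfl rfl, if_congr e0 rfl rfl, if_true, if_false]
        rw [Finset.sum_const_zero, add_zero]
        exact hh (Fin.tail x)
    · -- unequal slices: use symmetric difference
      have hne : ((X0 \ X1) ∪ (X1 \ X0)).Nonempty := by
        rw [Finset.nonempty_iff_ne_empty]
        intro hemp
        apply heq
        have h1 := Finset.union_eq_empty.mp hemp
        ext a
        constructor
        · intro ha
          by_contra hb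
          exact (Finset.notMem_empty a) (h1.1 ▸ Finset.mem_sdiff.mpr ⟨ha, hb⟩)
        · intro ha
          by_contra hb
          exact (Finset.notMem_empty a) (h1.2 ▸ Finset.mem_sdiff.mpr ⟨ha, hb⟩)
      obtain ⟨h, hh⟩ := ih _ hne
      refine ⟨fun y => h (Fin.tail y), fun x => ?_⟩
      rw [sum_split X (fun (a : Q (k+1)) => h (Fin.tail (x + a)))]
      rw [← hX0, ← hX1]
      have htail : ∀ (b : ZMod 2) (a' : Q k),
          Fin.tail (x + (Fin.cons b a' : Q (k+1))) = Fin.tail x + a' := by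
        intro b a'
        rw [tail_add, Fin.tail_cons]
      simp only [htail]
      rw [sum_symmDiff X0 X1 (fun a' => h (Fin.tail x + a'))]
      exact hh (Fin.tail x)


lemma append_eq_iff {n m : ℕ} (f : Q n) (g : Q m) (x : Q (n + m)) :
    Fin.append f g = x ↔
      (f = fun i => x (Fin.castAdd m i)) ∧ (g = fun j => x (Fin.natAdd n j)) := by
  constructor
  · rintro rfl
    exact ⟨by funext i; rw [Fin.append_left], by funext j; rw [Fin.append_right]⟩
  · rintro ⟨rfl, rfl⟩
    funext i
    refine Fin.addCases (fun j => ?_) (fun j => ?_) i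
    · rw [Fin.append_left]
    · rw [Fin.append_right]

lemma castAdd_injective (n m : ℕ) : Function.Injective (Fin.castAdd m : Fin n → Fin (n + m)) := by
  intro a b h
  exact Fin.ext (by simpa [Fin.coe_castAdd] using congrArg Fin.val h)

lemma natAdd_injective (n m : ℕ) : Function.Injective (Fin.natAdd n : Fin m → Fin (n + m)) := by
  intro a b h
  have := congrArg Fin.val h
  simp only [Fin.coe_natAdd] at this
  exact Fin.ext (by omega)

/-- left-block version of copy embedding -/
lemma emb_append_left {k n m : ℕ} (e : Fin k ↪ Fin n) (c : Q n) (y : Q m) (a : Q k) :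
    emb (e.trans (Fin.castAddEmb m)) (Fin.append c y) a = Fin.append (emb e c a) y := by
  funext i
  refine Fin.addCases (fun j => ?_) (fun j => ?_) i
  · rw [Fin.append_left]
    by_cases hj : ∃ j0, e j0 = j
    · obtain ⟨j0, rfl⟩ := hj
      have h1 : Fin.castAdd m (e j0) = (e.trans (Fin.castAddEmb m)) j0 := rfl
      rw [h1, emb_apply_mem, ← h1, Fin.append_left, emb_apply_mem]
    · have hnot : ¬∃ j0, (e.trans (Fin.castAddEmb m)) j0 = Fin.castAdd m j := by
        rintro ⟨j0, hj0⟩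
        exact hj ⟨j0, castAdd_injective n m hj0⟩
      rw [emb_apply_not_mem _ _ _ _ hnot, Fin.append_left, emb_apply_not_mem _ _ _ _ hj]
  · have hnot : ¬∃ j0, (e.trans (Fin.castAddEmb m)) j0 = Fin.natAdd n j := by
      rintro ⟨j0, hj0⟩
      have happ : (e.trans (Fin.castAddEmb m)) j0 = Fin.castAdd m (e j0) := rfl
      rw [happ] at hj0
      have := congrArg Fin.val hj0
      rw [Fin.coe_castAdd, Fin.coe_natAdd] at this
      have hlt : ((e j0 : Fin n) : ℕ) < n := (e j0).isLt
      omega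
    rw [emb_apply_not_mem _ _ _ _ hnot, Fin.append_right, Fin.append_right]

/-- right-block version -/
lemma emb_append_right {k n m : ℕ} (e : Fin k ↪ Fin m) (c : Q m) (y : Q n) (a : Q k) :
    emb (e.trans (Fin.natAddEmb n)) (Fin.append y c) a = Fin.append y (emb e c a) := by
  funext i
  refine Fin.addCases (fun j => ?_) (fun j => ?_) i
  · have hnot : ¬∃ j0, (e.trans (Fin.natAddEmb n)) j0 = Fin.castAdd m j := by
      rintro ⟨j0, hj0⟩
      have happ : (e.trans (Fin.natAddEmb n)) j0 = Fin.natAdd n (e j0) := rfl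
      rw [happ] at hj0
      have := congrArg Fin.val hj0
      rw [Fin.coe_castAdd, Fin.coe_natAdd] at this
      have hlt : (j : ℕ) < n := j.isLt
      omega
    rw [emb_apply_not_mem _ _ _ _ hnot, Fin.append_left, Fin.append_left]
  · rw [Fin.append_right]
    by_cases hj : ∃ j0, e j0 = j
    · obtain ⟨j0, rfl⟩ := hj
      have h1 : Fin.natAdd n (e j0) = (e.trans (Fin.natAddEmb n)) j0 := rfl
      rw [h1, emb_apply_mem, ← h1, Fin.append_right, emb_apply_mem]
    · have hnot : ¬∃ j0, (e.trans (Fin.natAddEmb n)) j0 = Fin.natAdd n j := by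
        rintro ⟨j0, hj0⟩
        exact hj ⟨j0, natAdd_injective n m hj0⟩
      rw [emb_apply_not_mem _ _ _ _ hnot, Fin.append_right, emb_apply_not_mem _ _ _ _ hj]


lemma ite_one_and {r : ℕ} (P R : Prop) [Decidable P] [Decidable R] :
    (if (P ∧ R) then (1 : ZMod r) else 0) = (if P then 1 else 0) * (if R then 1 else 0) := by
  by_cases hP : P <;> by_cases hR : R <;> simp [hP, hR]

lemma mem_image_emb_append_left {k n m : ℕ} (X : Finset (Q k)) (e : Fin k ↪ Fin n)
    (c : Q n) (y : Q m) (x : Q (n + m)) :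
    x ∈ X.image (emb (e.trans (Fin.castAddEmb m)) (Fin.append c y)) ↔
      ((fun i => x (Fin.castAdd m i)) ∈ X.image (emb e c) ∧ (fun j => x (Fin.natAdd n j)) = y) := by
  simp only [Finset.mem_image]
  constructor
  · rintro ⟨a, ha, hax⟩
    rw [emb_append_left] at hax
    obtain ⟨h1, h2⟩ := (append_eq_iff _ _ _).mp hax
    exact ⟨⟨a, ha, h1⟩, h2.symm⟩
  · rintro ⟨⟨a, ha, hax⟩, h2⟩
    refine ⟨a, ha, ?_⟩
    rw [emb_append_left, append_eq_iff]
    exact ⟨by rw [hax], by rw [h2]⟩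

lemma ach_tensor_left {r k n m : ℕ} (X : Finset (Q k)) {μ : Q n → ZMod r}
    (ν : Q m → ZMod r) (h : Ach r k n X μ) :
    Ach r k (n + m) X
      (fun x => μ (fun i => x (Fin.castAdd m i)) * ν (fun j => x (Fin.natAdd n j))) := by
  classical
  obtain ⟨W, hW⟩ := h
  refine ⟨fun P => ∑ t : ((Fin k ↪ Fin n) × Q n) × Q m,
     if P = (t.1.1.trans (Fin.castAddEmb m), Fin.append t.1.2 t.2) then W t.1 * ν t.2 else 0,
     fun x => ?_⟩
  dsimp only
  rw [Finset.sum_congr rfl (fun P _ => Finset.sum_mul _ _ _)]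
  rw [Finset.sum_comm]
  have hinner : ∀ t : ((Fin k ↪ Fin n) × Q n) × Q m,
      (∑ P : (Fin k ↪ Fin (n + m)) × Q (n + m),
        (if P = (t.1.1.trans (Fin.castAddEmb m), Fin.append t.1.2 t.2) then W t.1 * ν t.2 else 0)
          * (if x ∈ X.image (emb P.1 P.2) then 1 else 0))
      = (W t.1 * ν t.2) *
        (if x ∈ X.image (emb (t.1.1.trans (Fin.castAddEmb m)) (Fin.append t.1.2 t.2)) then 1 else 0) := by
    intro t
    rw [show (∑ P : (Fin k ↪ Fin (n + m)) × Q (n + m),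
        (if P = (t.1.1.trans (Fin.castAddEmb m), Fin.append t.1.2 t.2) then W t.1 * ν t.2 else 0)
          * (if x ∈ X.image (emb P.1 P.2) then 1 else 0))
      = ∑ P : (Fin k ↪ Fin (n + m)) × Q (n + m),
        (if P = (t.1.1.trans (Fin.castAddEmb m), Fin.append t.1.2 t.2) then
          (W t.1 * ν t.2) * (if x ∈ X.image (emb P.1 P.2) then 1 else 0) else 0) by
      refine Finset.sum_congr rfl fun P _ => ?_
      split <;> simp]
    rw [Finset.sum_ite_eq' univ]
    rw [if_pos (mem_univ _)]
  rw [Finset.sum_congr rfl (fun t _ => hinner t)]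
  -- now use membership characterization
  have hmem : ∀ t : ((Fin k ↪ Fin n) × Q n) × Q m,
      (W t.1 * ν t.2) *
        (if x ∈ X.image (emb (t.1.1.trans (Fin.castAddEmb m)) (Fin.append t.1.2 t.2)) then 1 else 0)
      = (W t.1 * ν t.2) *
        ((if (fun i => x (Fin.castAdd m i)) ∈ X.image (emb t.1.1 t.1.2) then 1 else 0)
          * (if (fun j => x (Fin.natAdd n j)) = t.2 then 1 else 0)) := by
    intro t
    rw [if_congr (mem_image_emb_append_left X t.1.1 t.1.2 t.2 x) rfl rfl, ite_one_and]
  rw [Finset.sum_congr rfl (fun t _ => hmem t)]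
  rw [Fintype.sum_prod_type]
  have hy : ∀ p : (Fin k ↪ Fin n) × Q n,
      (∑ y : Q m, (W p * ν y) *
        ((if (fun i => x (Fin.castAdd m i)) ∈ X.image (emb p.1 p.2) then 1 else 0)
          * (if (fun j => x (Fin.natAdd n j)) = y then 1 else 0)))
      = (W p * (if (fun i => x (Fin.castAdd m i)) ∈ X.image (emb p.1 p.2) then 1 else 0))
          * ν (fun j => x (Fin.natAdd n j)) := by
    intro p
    rw [show (∑ y : Q m, (W p * ν y) *
        ((if (fun i => x (Fin.castAdd m i)) ∈ X.image (emb p.1 p.2) then 1 else 0)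
          * (if (fun j => x (Fin.natAdd n j)) = y then 1 else 0)))
      = ∑ y : Q m, (if y = (fun j => x (Fin.natAdd n j)) then
          (W p * (if (fun i => x (Fin.castAdd m i)) ∈ X.image (emb p.1 p.2) then 1 else 0)) * ν y
          else 0) by
      refine Finset.sum_congr rfl fun y _ => ?_
      by_cases hyy : (fun j => x (Fin.natAdd n j)) = y
      · rw [if_pos hyy, if_pos hyy.symm]
        ring
      · have h2 : ¬ (y = fun j => x (Fin.natAdd n j)) := fun hc => hyy hc.symm
        rw [if_neg hyy, if_neg h2]
        ring]
    rw [Finset.sum_ite_eq' univ]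
    rw [if_pos (mem_univ _)]
  rw [Finset.sum_congr rfl (fun p _ => hy p)]
  rw [← Finset.sum_mul, ← hW]

lemma mem_image_emb_append_right {k n m : ℕ} (X : Finset (Q k)) (e : Fin k ↪ Fin m)
    (c : Q m) (y : Q n) (x : Q (n + m)) :
    x ∈ X.image (emb (e.trans (Fin.natAddEmb n)) (Fin.append y c)) ↔
      ((fun j => x (Fin.natAdd n j)) ∈ X.image (emb e c) ∧ (fun i => x (Fin.castAdd m i)) = y) := by
  simp only [Finset.mem_image]
  constructor
  · rintro ⟨a, ha, hax⟩
    rw [emb_append_right] at hax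
    obtain ⟨h1, h2⟩ := (append_eq_iff _ _ _).mp hax
    exact ⟨⟨a, ha, h2⟩, h1.symm⟩
  · rintro ⟨⟨a, ha, hax⟩, h2⟩
    refine ⟨a, ha, ?_⟩
    rw [emb_append_right, append_eq_iff]
    exact ⟨by rw [h2], by rw [hax]⟩

lemma ach_tensor_right {r k n m : ℕ} (X : Finset (Q k)) {μ : Q m → ZMod r}
    (ν : Q n → ZMod r) (h : Ach r k m X μ) :
    Ach r k (n + m) X
      (fun x => ν (fun i => x (Fin.castAdd m i)) * μ (fun j => x (Fin.natAdd n j))) := by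
  classical
  obtain ⟨W, hW⟩ := h
  refine ⟨fun P => ∑ t : ((Fin k ↪ Fin m) × Q m) × Q n,
     if P = (t.1.1.trans (Fin.natAddEmb n), Fin.append t.2 t.1.2) then W t.1 * ν t.2 else 0,
     fun x => ?_⟩
  dsimp only
  rw [Finset.sum_congr rfl (fun P _ => Finset.sum_mul _ _ _)]
  rw [Finset.sum_comm]
  have hinner : ∀ t : ((Fin k ↪ Fin m) × Q m) × Q n,
      (∑ P : (Fin k ↪ Fin (n + m)) × Q (n + m),
        (if P = (t.1.1.trans (Fin.natAddEmb n), Fin.append t.2 t.1.2) then W t.1 * ν t.2 else 0)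
          * (if x ∈ X.image (emb P.1 P.2) then 1 else 0))
      = (W t.1 * ν t.2) *
        (if x ∈ X.image (emb (t.1.1.trans (Fin.natAddEmb n)) (Fin.append t.2 t.1.2)) then 1 else 0) := by
    intro t
    rw [show (∑ P : (Fin k ↪ Fin (n + m)) × Q (n + m),
        (if P = (t.1.1.trans (Fin.natAddEmb n), Fin.append t.2 t.1.2) then W t.1 * ν t.2 else 0)
          * (if x ∈ X.image (emb P.1 P.2) then 1 else 0))
      = ∑ P : (Fin k ↪ Fin (n + m)) × Q (n + m),
        (if P = (t.1.1.trans (Fin.natAddEmb n), Fin.append t.2 t.1.2) then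
          (W t.1 * ν t.2) * (if x ∈ X.image (emb P.1 P.2) then 1 else 0) else 0) by
      refine Finset.sum_congr rfl fun P _ => ?_
      split <;> simp]
    rw [Finset.sum_ite_eq' univ]
    rw [if_pos (mem_univ _)]
  rw [Finset.sum_congr rfl (fun t _ => hinner t)]
  have hmem : ∀ t : ((Fin k ↪ Fin m) × Q m) × Q n,
      (W t.1 * ν t.2) *
        (if x ∈ X.image (emb (t.1.1.trans (Fin.natAddEmb n)) (Fin.append t.2 t.1.2)) then 1 else 0)
      = (W t.1 * ν t.2) *
        ((if (fun j => x (Fin.natAdd n j)) ∈ X.image (emb t.1.1 t.1.2) then 1 else 0)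
          * (if (fun i => x (Fin.castAdd m i)) = t.2 then 1 else 0)) := by
    intro t
    rw [if_congr (mem_image_emb_append_right X t.1.1 t.1.2 t.2 x) rfl rfl, ite_one_and]
  rw [Finset.sum_congr rfl (fun t _ => hmem t)]
  rw [Fintype.sum_prod_type]
  have hy : ∀ p : (Fin k ↪ Fin m) × Q m,
      (∑ y : Q n, (W p * ν y) *
        ((if (fun j => x (Fin.natAdd n j)) ∈ X.image (emb p.1 p.2) then 1 else 0)
          * (if (fun i => x (Fin.castAdd m i)) = y then 1 else 0)))
      = (W p * (if (fun j => x (Fin.natAdd n j)) ∈ X.image (emb p.1 p.2) then 1 else 0))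
          * ν (fun i => x (Fin.castAdd m i)) := by
    intro p
    rw [show (∑ y : Q n, (W p * ν y) *
        ((if (fun j => x (Fin.natAdd n j)) ∈ X.image (emb p.1 p.2) then 1 else 0)
          * (if (fun i => x (Fin.castAdd m i)) = y then 1 else 0)))
      = ∑ y : Q n, (if y = (fun i => x (Fin.castAdd m i)) then
          (W p * (if (fun j => x (Fin.natAdd n j)) ∈ X.image (emb p.1 p.2) then 1 else 0)) * ν y
          else 0) by
      refine Finset.sum_congr rfl fun y _ => ?_
      by_cases hyy : (fun i => x (Fin.castAdd m i)) = y
      · rw [if_pos hyy, if_pos hyy.symm]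
        ring
      · have h2 : ¬ (y = fun i => x (Fin.castAdd m i)) := fun hc => hyy hc.symm
        rw [if_neg hyy, if_neg h2]
        ring]
    rw [Finset.sum_ite_eq' univ]
    rw [if_pos (mem_univ _)]
  rw [Finset.sum_congr rfl (fun p _ => hy p)]
  rw [← Finset.sum_mul, ← hW, mul_comm]

lemma ach_lift {s r k n : ℕ} [NeZero s] {X : Finset (Q k)} {μ : Q n → ZMod s}
    (h : Ach s k n X μ) :
    ∃ μ' : Q n → ZMod r, Ach r k n X μ' ∧
      ∀ x, ∃ N : ℕ, μ' x = (N : ZMod r) ∧ (N : ZMod s) = μ x := by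
  obtain ⟨W, hW⟩ := h
  refine ⟨fun x => ((∑ p : (Fin k ↪ Fin n) × Q n,
      (W p).val * (if x ∈ X.image (emb p.1 p.2) then 1 else 0) : ℕ) : ZMod r),
    ⟨fun p => ((W p).val : ZMod r), fun x => ?_⟩, fun x => ⟨_, rfl, ?_⟩⟩
  · push_cast
    rfl
  · push_cast
    rw [hW x]
    refine Finset.sum_congr rfl fun p _ => ?_
    rw [ZMod.natCast_val, ZMod.cast_id]

lemma ach_mod2_base {k : ℕ} (X : Finset (Q k)) (hX : X.Nonempty) :
    Ach 2 k k X (fun _ => 1) := by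
  obtain ⟨g, hg⟩ := mod2_lemma k X hX
  exact (ach_translates X g).congr hg

/-- key arithmetic fact -/
lemma cast_mul_pow_odd {j N : ℕ} (hN : (N : ZMod 2) = 1) :
    ((2^(j+1) : ZMod (2^(j+2)))) * (N : ZMod (2^(j+2))) = (2^(j+1) : ZMod (2^(j+2))) := by
  have h1 : N ≡ 1 [MOD 2] := by
    rw [← ZMod.natCast_eq_natCast_iff]
    rw [hN, Nat.cast_one]
  have h2 : 2^(j+1) * N ≡ 2^(j+1) * 1 [MOD 2^(j+1) * 2] := Nat.ModEq.mul_left' _ h1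
  rw [mul_one] at h2
  rw [show 2^(j+1) * 2 = 2^(j+2) by ring] at h2
  have h3 := (ZMod.natCast_eq_natCast_iff _ _ _).mpr h2
  push_cast at h3
  exact h3

lemma main_induction (k : ℕ) (X : Finset (Q k)) (hX : X.Nonempty) :
    ∀ j : ℕ, Ach (2^(j+1)) k (k + j*k) X (fun _ => 1) := by
  intro j
  induction j with
  | zero =>
    rw [show k + 0*k = k by ring, show (2:ℕ)^(0+1) = 2 by norm_num]
    exact ach_mod2_base X hX
  | succ j ih =>
    rw [show k + (j+1)*k = (k + j*k) + k by ring]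
    set n := k + j * k with hn
    have hnz : NeZero (2^(j+1)) := ⟨by positivity⟩
    -- lift the mod 2^(j+1) solution to mod 2^(j+2)
    obtain ⟨μ', hach', hval⟩ := ach_lift (r := 2^(j+2)) ih
    -- dichotomy
    have key : ∀ z : Q n, μ' z = 1 + (2^(j+1) : ZMod (2^(j+2))) * (if μ' z = 1 then 0 else 1) := by
      intro z
      by_cases h1 : μ' z = 1
      · rw [if_pos h1, mul_zero, add_zero, h1]
      · rw [if_neg h1, mul_one]
        obtain ⟨N, hN1, hN2⟩ := hval z
        have hmod : N ≡ 1 [MOD 2^(j+1)] := by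
          rw [← ZMod.natCast_eq_natCast_iff, hN2, Nat.cast_one]
        have hNm : N % 2^(j+1) = 1 := by
          have := hmod
          unfold Nat.ModEq at this
          rw [this, Nat.mod_eq_of_lt (by
            have : 1 < 2^(j+1) := Nat.one_lt_two_pow (by omega)
            omega)]
        have hdecomp : N = 2^(j+1) * (N / 2^(j+1)) + 1 := by
          conv_lhs => rw [← Nat.div_add_mod N (2^(j+1))]
          rw [hNm]
        set q := N / 2^(j+1) with hq
        have hq2 : q % 2 = 0 ∨ q % 2 = 1 := Nat.mod_two_eq_zero_or_one q
        have hcast : (N : ZMod (2^(j+2))) = 1 + (2^(j+1) : ZMod (2^(j+2))) * ((q % 2 : ℕ) : ZMod (2^(j+2))) := by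
          have hmq : 2^(j+1) * q ≡ 2^(j+1) * (q % 2) [MOD 2^(j+1) * 2] :=
            Nat.ModEq.mul_left' _ (Nat.mod_modEq q 2).symm
          rw [show 2^(j+1) * 2 = 2^(j+2) by ring] at hmq
          have hc := (ZMod.natCast_eq_natCast_iff _ _ _).mpr hmq
          rw [hdecomp]
          push_cast
          push_cast at hc
          rw [hc]
          ring
        rcases hq2 with h0 | h0
        · exfalso
          apply h1
          rw [hN1, hcast, h0]
          norm_num
        · rw [hN1, hcast, h0]
          norm_num
    -- the correction block
    obtain ⟨κ, hκach, hκval⟩ := ach_lift (r := 2^(j+2)) (ach_mod2_base X hX)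
    have hκ : ∀ y : Q k, (2^(j+1) : ZMod (2^(j+2))) * κ y = (2^(j+1) : ZMod (2^(j+2))) := by
      intro y
      obtain ⟨N, hN1, hN2⟩ := hκval y
      rw [hN1]
      exact cast_mul_pow_odd hN2
    -- assemble
    have T1 := ach_tensor_left X (ν := fun _ : Q k => (1 : ZMod (2^(j+2)))) hach'
    have T2 := ach_tensor_right X
      (ν := fun z : Q n => (if μ' z = 1 then (0 : ZMod (2^(j+2))) else 1) * 2^(j+1)) hκach
    refine (T1.sub T2).congr ?_
    intro x
    simp only [Pi.sub_apply]

    rw [mul_one]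
    have hκ2 : (if μ' (fun i => x (Fin.castAdd k i)) = 1 then (0 : ZMod (2^(j+2))) else 1)
        * 2^(j+1) * κ (fun j' => x (Fin.natAdd n j'))
        = (2^(j+1) : ZMod (2^(j+2))) * (if μ' (fun i => x (Fin.castAdd k i)) = 1 then 0 else 1) := by
      by_cases h : μ' (fun i => x (Fin.castAdd k i)) = 1
      · rw [if_pos h, zero_mul, zero_mul, mul_zero]
      · rw [if_neg h, one_mul, mul_one]
        exact hκ _
    rw [hκ2, sub_eq_iff_eq_add]
    exact key _

end Stmt3Aux

theorem stmt_3 (k : ℕ) (X : Finset (Fin k → ZMod 2)) (hX : X.Nonempty)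
    (r d : ℕ) (hr : r = 2 ^ d) :
    ∃ n : ℕ, k ≤ n ∧
      ∃ w : Finset (Fin n → ZMod 2) → ℕ,
        (∀ A, w A ≠ 0 → ∃ φ : (Fin k → ZMod 2) → (Fin n → ZMod 2),
          (∀ a b, hammingDist (φ a) (φ b) = hammingDist a b) ∧ X.image φ = A) ∧
        (∀ x : Fin n → ZMod 2,
          (∑ A ∈ Finset.univ.filter (fun A : Finset (Fin n → ZMod 2) => x ∈ A), w A) ≡ 1 [MOD r]) := by
  classical
  cases d with
  | zero =>
    refine ⟨k, le_refl k, fun _ => 0, fun A h => absurd rfl h, fun x => ?_⟩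
    rw [hr]
    norm_num
  | succ j =>
    obtain ⟨W, hW⟩ := Stmt3Aux.main_induction k X hX j
    refine ⟨k + j * k, Nat.le_add_right _ _, fun A => ∑ p : (Fin k ↪ Fin (k + j*k)) × (Fin (k+j*k) → ZMod 2),
      if X.image (Stmt3Aux.emb p.1 p.2) = A then (W p).val else 0, ?_, ?_⟩
    · intro A hA
      obtain ⟨p, _, hp⟩ := Finset.exists_ne_zero_of_sum_ne_zero hA
      by_cases hcase : X.image (Stmt3Aux.emb p.1 p.2) = A
      · exact ⟨Stmt3Aux.emb p.1 p.2, fun a b => Stmt3Aux.emb_isometry p.1 p.2 a b, hcase⟩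
      · exact absurd (if_neg hcase) hp
    · intro x
      rw [Finset.sum_comm]
      have hinner : ∀ p : (Fin k ↪ Fin (k + j*k)) × (Fin (k+j*k) → ZMod 2),
          (∑ A ∈ Finset.univ.filter (fun A : Finset (Fin (k+j*k) → ZMod 2) => x ∈ A),
            if X.image (Stmt3Aux.emb p.1 p.2) = A then (W p).val else 0)
          = if x ∈ X.image (Stmt3Aux.emb p.1 p.2) then (W p).val else 0 := by
        intro p
        rw [Finset.sum_ite_eq]
        refine if_congr ?_ rfl rfl
        simp only [Finset.mem_filter, Finset.mem_univ, true_and]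
      rw [Finset.sum_congr rfl (fun p _ => hinner p)]
      rw [hr]
      rw [← ZMod.natCast_eq_natCast_iff]
      push_cast
      calc (∑ p : (Fin k ↪ Fin (k + j*k)) × (Fin (k+j*k) → ZMod 2),
              if x ∈ X.image (Stmt3Aux.emb p.1 p.2) then (((W p).val : ℕ) : ZMod (2^(j+1))) else 0)
          = ∑ p : (Fin k ↪ Fin (k + j*k)) × (Fin (k+j*k) → ZMod 2),
              W p * (if x ∈ X.image (Stmt3Aux.emb p.1 p.2) then 1 else 0) := by
            refine Finset.sum_congr rfl fun p _ => ?_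
            rw [ZMod.natCast_val, ZMod.cast_id]
            split <;> simp
        _ = 1 := (hW x).symm
end

section
/- For every odd ℓ ≥ 3 there exists a graph H that is isomorphic to an induced subgraph of some power P_ℓ^m of the path on ℓ vertices, has |V(H)| = ℓ^2 (a power of ℓ), but such that for every n the vertex set of P_ℓ^n cannot be partitioned into sets inducing copies of H. -/
/-- The `n`-th Cartesian power of the path on `ℓ` vertices: vertices are tuples in
`{0,...,ℓ-1}^n`, adjacent iff their ℓ1-distance is 1. -/
def pathPower (ℓ n : ℕ) : SimpleGraph (Fin n → Fin ℓ) where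
  Adj x y := ∑ i, (((x i).val : ℤ) - ((y i).val : ℤ)).natAbs = 1
  symm := by
    refine ⟨?_⟩
    intro x y h
    beta_reduce at h ⊢
    rw [← h]
    exact Finset.sum_congr rfl fun i _ => by omega
  loopless := by refine ⟨?_⟩; intro x h; beta_reduce at h; simp at h

/-- Parity of the coordinate sum. -/
def par {ℓ n : ℕ} (x : Fin n → Fin ℓ) : ZMod 2 := ∑ i, ((x i).val : ZMod 2)

/-- Index type for the vertices of the special graph `H`. -/
abbrev Pidx (ℓ : ℕ) := Fin (2*ℓ-1) ⊕ Fin (ℓ-1) × Fin (ℓ-1)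

/-- Support condition for the special graph's vertices. -/
def gcond (ℓ : ℕ) : Pidx ℓ → ℕ → Prop
  | Sum.inl t => fun i => i < t.val
  | Sum.inr p => fun i => i < 2*p.1.val ∨ i = 2*ℓ + p.2.val

open Classical in
/-- Vertices of the special graph `H` inside `P_ℓ^{3ℓ}`. -/
noncomputable def gfun (ℓ : ℕ) [NeZero ℓ] (a : Pidx ℓ) (i : Fin (3*ℓ)) : Fin ℓ :=
  if gcond ℓ a i.val then 1 else 0

lemma zmod2_cases : ∀ k : ZMod 2, k = 0 ∨ k = 1 := by decide

open Classical in
lemma gval {ℓ : ℕ} [NeZero ℓ] (hl : 2 ≤ ℓ) (a : Pidx ℓ) (i : Fin (3*ℓ)) :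
    (gfun ℓ a i).val = if gcond ℓ a i.val then 1 else 0 := by
  unfold gfun
  split
  · rw [Fin.val_one']; exact Nat.mod_eq_of_lt (by omega)
  · simp

lemma par_eq_cast_sum {ℓ n : ℕ} (x : Fin n → Fin ℓ) :
    par x = ((∑ i, (x i).val : ℕ) : ZMod 2) := by
  rw [par, Nat.cast_sum]

lemma par_adj {ℓ n : ℕ} {x y : Fin n → Fin ℓ} (h : (pathPower ℓ n).Adj x y) :
    par x + par y = 1 := by
  have h' : ∑ i, (((x i).val : ℤ) - ((y i).val : ℤ)).natAbs = 1 := h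
  have key : ∀ a b : ℕ, ((a : ZMod 2) + b) = ((((a:ℤ) - b).natAbs : ℕ) : ZMod 2) := by
    intro a b
    have h2 : ((a:ℤ) - b).natAbs % 2 = (a + b) % 2 := by omega
    calc (a : ZMod 2) + b = ((a + b : ℕ) : ZMod 2) := by push_cast; ring
      _ = ((((a:ℤ) - b).natAbs : ℕ) : ZMod 2) := by
          rw [ZMod.natCast_eq_natCast_iff]
          exact h2.symm
  calc par x + par y = ∑ i, (((x i).val : ZMod 2) + ((y i).val : ZMod 2)) := by
        rw [par, par, ← Finset.sum_add_distrib]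
    _ = ∑ i, (((((x i).val:ℤ) - ((y i).val:ℤ)).natAbs : ℕ) : ZMod 2) :=
        Finset.sum_congr rfl fun i _ => key _ _
    _ = ((∑ i, ((((x i).val:ℤ) - ((y i).val:ℤ)).natAbs) : ℕ) : ZMod 2) := by
        rw [Nat.cast_sum]
    _ = 1 := by rw [h']; simp

lemma par_gfun_inl {ℓ : ℕ} [NeZero ℓ] (hl : 2 ≤ ℓ) (t : Fin (2*ℓ-1)) :
    par (gfun ℓ (Sum.inl t)) = (t.val : ZMod 2) := by
  classical
  have ht := t.isLt
  have key : par (gfun ℓ (Sum.inl t))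
      = ∑ i : Fin (3*ℓ), (if gcond ℓ (Sum.inl t) i.val then (1:ZMod 2) else 0) := by
    rw [par]
    refine Finset.sum_congr rfl fun i _ => ?_
    rw [gval hl]
    split <;> simp
  rw [key, Fin.sum_univ_eq_sum_range (fun j => if gcond ℓ (Sum.inl t) j then (1:ZMod 2) else 0),
    Finset.sum_boole]
  have hfil : (Finset.range (3*ℓ)).filter (fun j => gcond ℓ (Sum.inl t) j)
      = Finset.range t.val := by
    ext j; rw [Finset.mem_filter]; simp only [Finset.mem_range, gcond]; omega
  rw [hfil, Finset.card_range]

lemma par_gfun_inr {ℓ : ℕ} [NeZero ℓ] (hl : 3 ≤ ℓ) (s r : Fin (ℓ-1)) :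
    par (gfun ℓ (Sum.inr (s, r))) = 1 := by
  classical
  have hs := s.isLt
  have hr := r.isLt
  have key : par (gfun ℓ (Sum.inr (s, r)))
      = ∑ i : Fin (3*ℓ), (if gcond ℓ (Sum.inr (s, r)) i.val then (1:ZMod 2) else 0) := by
    rw [par]
    refine Finset.sum_congr rfl fun i _ => ?_
    rw [gval (by omega)]
    split <;> simp
  rw [key, Fin.sum_univ_eq_sum_range
    (fun j => if gcond ℓ (Sum.inr (s, r)) j then (1:ZMod 2) else 0), Finset.sum_boole]
  have hfil : (Finset.range (3*ℓ)).filter (fun j => gcond ℓ (Sum.inr (s, r)) j)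
      = insert (2*ℓ + r.val) (Finset.range (2*s.val)) := by
    ext j; rw [Finset.mem_filter]; simp only [Finset.mem_range, Finset.mem_insert, gcond]; omega
  rw [hfil, Finset.card_insert_of_notMem (by simp only [Finset.mem_range]; omega), Finset.card_range]
  push_cast
  have : (2 : ZMod 2) = 0 := by decide
  rw [this]
  ring

lemma gfun_injective {ℓ : ℕ} [NeZero ℓ] (hl : 3 ≤ ℓ) : Function.Injective (gfun ℓ) := by
  intro a b hab
  have h : ∀ j, j < 3*ℓ → (gcond ℓ a j ↔ gcond ℓ b j) := by
    intro j hj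
    have h1 := congrArg Fin.val (congrFun hab ⟨j, hj⟩)
    rw [gval (by omega), gval (by omega)] at h1
    constructor
    · intro hc
      by_contra hc2
      rw [if_pos hc, if_neg hc2] at h1
      exact one_ne_zero h1
    · intro hc
      by_contra hc2
      rw [if_neg hc2, if_pos hc] at h1
      exact zero_ne_one h1
  match a, b with
  | Sum.inl t, Sum.inl t' =>
    have ht := t.isLt; have ht' := t'.isLt
    have h1 := h t.val (by omega)
    have h2 := h t'.val (by omega)
    simp only [gcond] at h1 h2
    have : t = t' := Fin.ext (by omega)
    rw [this]
  | Sum.inl t, Sum.inr (s, r) =>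
    exfalso
    have ht := t.isLt; have hs := s.isLt; have hr := r.isLt
    have h1 := h (2*ℓ + r.val) (by omega)
    simp [gcond] at h1
    omega
  | Sum.inr (s, r), Sum.inl t =>
    exfalso
    have ht := t.isLt; have hs := s.isLt; have hr := r.isLt
    have h1 := h (2*ℓ + r.val) (by omega)
    simp [gcond] at h1
    omega
  | Sum.inr (s, r), Sum.inr (s', r') =>
    have hs := s.isLt; have hr := r.isLt; have hs' := s'.isLt; have hr' := r'.isLt
    have h1 := h (2*ℓ + r.val) (by omega)
    have h2 := h (2*ℓ + r'.val) (by omega)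
    have h3 := h (2*s.val) (by omega)
    have h4 := h (2*s'.val) (by omega)
    simp [gcond] at h1 h2 h3 h4
    have hr0 : r = r' := Fin.ext (by omega)
    have hs0 : s = s' := Fin.ext (by omega)
    rw [hr0, hs0]

lemma adj_single {ℓ N : ℕ} (x y : Fin N → Fin ℓ) (j : Fin N)
    (hj : ∀ i, i ≠ j → x i = y i)
    (hd : (((x j).val : ℤ) - ((y j).val : ℤ)).natAbs = 1) :
    (pathPower ℓ N).Adj x y := by
  show ∑ i, (((x i).val : ℤ) - ((y i).val : ℤ)).natAbs = 1
  rw [Finset.sum_eq_single j (fun b _ hb => by rw [hj b hb]; simp) (by simp)]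
  exact hd

lemma walk_const {α : Type*} {G : SimpleGraph α} (f : α → ZMod 2)
    (hf : ∀ a b, G.Adj a b → f a = f b) {a b : α} (h : G.Reachable a b) : f a = f b := by
  obtain ⟨w⟩ := h
  induction w with
  | nil => rfl
  | cons h p ih => exact (hf _ _ h).trans ih

section Adj

variable {ℓ : ℕ} [NeZero ℓ]

lemma adj_inl (hl : 3 ≤ ℓ) (t t' : Fin (2*ℓ-1)) (h : t'.val = t.val + 1) :
    (pathPower ℓ (3*ℓ)).Adj (gfun ℓ (Sum.inl t)) (gfun ℓ (Sum.inl t')) := by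
  classical
  have ht := t.isLt
  refine adj_single _ _ ⟨t.val, by omega⟩ (fun i hi => ?_) ?_
  · have hiv : i.val ≠ t.val := fun hc => hi (Fin.ext hc)
    unfold gfun
    have h2 : gcond ℓ (Sum.inl t) i.val ↔ gcond ℓ (Sum.inl t') i.val := by
      simp only [gcond]; omega
    exact if_congr h2 rfl rfl
  · rw [gval (by omega), gval (by omega)]
    simp only [gcond]
    have c1 : ¬ ((⟨t.val, by omega⟩ : Fin (3*ℓ)).val < t.val) := by simp
    have c2 : ((⟨t.val, by omega⟩ : Fin (3*ℓ)).val < t'.val) := by simp; omega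
    simp only [show ¬ (t.val < t.val) from lt_irrefl _, show t.val < t'.val by omega]
    simp

lemma adj_inr (hl : 3 ≤ ℓ) (s r : Fin (ℓ-1)) (t : Fin (2*ℓ-1)) (h : t.val = 2*s.val) :
    (pathPower ℓ (3*ℓ)).Adj (gfun ℓ (Sum.inr (s, r))) (gfun ℓ (Sum.inl t)) := by
  classical
  have hs := s.isLt; have hr := r.isLt
  refine adj_single _ _ ⟨2*ℓ + r.val, by omega⟩ (fun i hi => ?_) ?_
  · have hiv : i.val ≠ 2*ℓ + r.val := fun hc => hi (Fin.ext hc)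
    unfold gfun
    have h2 : gcond ℓ (Sum.inr (s, r)) i.val ↔ gcond ℓ (Sum.inl t) i.val := by
      simp [gcond]; omega
    exact if_congr h2 rfl rfl
  · rw [gval (by omega), gval (by omega)]
    simp only [gcond]
    simp only [show ¬ (2*ℓ + r.val < t.val) by omega]
    simp

end Adj

lemma gconn {ℓ : ℕ} [NeZero ℓ] (hl : 3 ≤ ℓ) :
    ((pathPower ℓ (3*ℓ)).induce (Set.range (gfun ℓ))).Connected := by
  classical
  set G := (pathPower ℓ (3*ℓ)).induce (Set.range (gfun ℓ)) with hG
  have hmem : ∀ a, gfun ℓ a ∈ Set.range (gfun ℓ) := fun a => Set.mem_range_self a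
  let root : ↥(Set.range (gfun ℓ)) := ⟨gfun ℓ (Sum.inl ⟨0, by omega⟩), hmem _⟩
  have key : ∀ j (hj : j < 2*ℓ-1),
      G.Reachable ⟨gfun ℓ (Sum.inl ⟨j, hj⟩), hmem _⟩ root := by
    intro j
    induction j with
    | zero => intro hj; exact SimpleGraph.Reachable.refl _
    | succ k ih =>
      intro hj
      have hk : k < 2*ℓ-1 := by omega
      have hadj : G.Adj ⟨gfun ℓ (Sum.inl ⟨k+1, hj⟩), hmem _⟩ ⟨gfun ℓ (Sum.inl ⟨k, hk⟩), hmem _⟩ := by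
        show (pathPower ℓ (3*ℓ)).Adj _ _
        exact ((adj_inl hl ⟨k, hk⟩ ⟨k+1, hj⟩ rfl).symm)
      exact hadj.reachable.trans (ih hk)
  have reach : ∀ u : ↥(Set.range (gfun ℓ)), G.Reachable u root := by
    rintro ⟨x, hx⟩
    obtain ⟨a, rfl⟩ := hx
    match a with
    | Sum.inl t =>
      have := key t.val t.isLt
      convert this using 2
    | Sum.inr (s, r) =>
      have hs := s.isLt
      have h2s : 2*s.val < 2*ℓ-1 := by omega
      have hadj : G.Adj ⟨gfun ℓ (Sum.inr (s, r)), hmem _⟩ ⟨gfun ℓ (Sum.inl ⟨2*s.val, h2s⟩), hmem _⟩ := by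
        show (pathPower ℓ (3*ℓ)).Adj _ _
        exact adj_inr hl s r ⟨2*s.val, h2s⟩ rfl
      exact hadj.reachable.trans (key _ h2s)
  haveI : Nonempty ↥(Set.range (gfun ℓ)) := ⟨root⟩
  exact SimpleGraph.Connected.mk fun u v => (reach u).trans (reach v).symm

lemma card_par_zero {ℓ : ℕ} [NeZero ℓ] (hl : 3 ≤ ℓ) :
    (Finset.univ.filter fun a : Pidx ℓ => par (gfun ℓ a) = 0).card = ℓ := by
  classical
  set F := Finset.univ.filter fun a : Pidx ℓ => par (gfun ℓ a) = 0 with hF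
  rw [← Finset.card_toLeft_add_card_toRight (u := F)]
  have hright : F.toRight = ∅ := by
    ext q
    obtain ⟨s, r⟩ := q
    simp [hF, par_gfun_inr hl]
  have hleft : F.toLeft = Finset.univ.filter fun t : Fin (2*ℓ-1) => 2 ∣ t.val := by
    ext t
    simp [hF, par_gfun_inl (by omega : 2 ≤ ℓ), ZMod.natCast_eq_zero_iff]
  rw [hright, hleft]
  simp only [Finset.card_empty, add_zero]
  have himg : (Finset.univ.filter fun t : Fin (2*ℓ-1) => 2 ∣ t.val)
      = Finset.image (fun i : Fin ℓ => (⟨2*i.val, by have := i.isLt; omega⟩ : Fin (2*ℓ-1)))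
          Finset.univ := by
    ext t
    simp only [Finset.mem_filter, Finset.mem_univ, true_and, Finset.mem_image]
    constructor
    · rintro ⟨c, hc⟩
      have ht := t.isLt
      exact ⟨⟨c, by omega⟩, Fin.ext (by simp; omega)⟩
    · rintro ⟨i, rfl⟩
      exact ⟨i.val, rfl⟩
  rw [himg, Finset.card_image_of_injective _ (fun i i' hii => Fin.ext (by
    have := congrArg Fin.val hii
    simp at this
    omega))]
  simp

lemma card_pidx {ℓ : ℕ} (hl : 3 ≤ ℓ) : Fintype.card (Pidx ℓ) = ℓ*ℓ := by
  obtain ⟨a, rfl⟩ : ∃ a, ℓ = a + 1 := ⟨ℓ-1, by omega⟩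
  simp [Fintype.card_sum, Fintype.card_prod]
  have h1 : 2*(a+1)-1 = 2*a+1 := by omega
  rw [h1]
  ring

lemma card_par_one {ℓ : ℕ} [NeZero ℓ] (hl : 3 ≤ ℓ) :
    (Finset.univ.filter fun a : Pidx ℓ => par (gfun ℓ a) = 1).card = ℓ*ℓ - ℓ := by
  classical
  have hsplit := Finset.card_filter_add_card_filter_not
    (s := (Finset.univ : Finset (Pidx ℓ))) (p := fun a => par (gfun ℓ a) = 0)
  have h0 := card_par_zero hl
  have hcongr : (Finset.univ.filter fun a : Pidx ℓ => par (gfun ℓ a) = 1)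
      = (Finset.univ.filter fun a : Pidx ℓ => ¬ (par (gfun ℓ a) = 0)) := by
    apply Finset.filter_congr
    intro a _
    rcases zmod2_cases (par (gfun ℓ a)) with h | h <;> simp [h]
  rw [hcongr]
  have hcu : (Finset.univ : Finset (Pidx ℓ)).card = ℓ*ℓ := by
    rw [Finset.card_univ, card_pidx hl]
  omega

lemma two_mul_card_evens {ℓ : ℕ} (hodd : Odd ℓ) (n : ℕ) :
    2 * (Finset.univ.filter fun x : Fin n → Fin ℓ => par x = 0).card = ℓ^n + 1 := by
  classical
  set E := (Finset.univ.filter fun x : Fin n → Fin ℓ => par x = 0).card with hE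
  set O := (Finset.univ.filter fun x : Fin n → Fin ℓ => ¬ (par x = 0)).card with hO
  have hEO : E + O = ℓ^n := by
    rw [hE, hO, Finset.card_filter_add_card_filter_not, Finset.card_univ,
      Fintype.card_fun, Fintype.card_fin, Fintype.card_fin]
  have hsum : ∑ x : Fin n → Fin ℓ, (-1:ℤ)^(∑ i, (x i).val) = 1 := by
    calc ∑ x : Fin n → Fin ℓ, (-1:ℤ)^(∑ i, (x i).val)
        = ∑ x : Fin n → Fin ℓ, ∏ i, (-1:ℤ)^((x i).val) := by
          refine Finset.sum_congr rfl fun x _ => ?_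
          rw [Finset.prod_pow_eq_pow_sum]
      _ = ∏ i : Fin n, ∑ v : Fin ℓ, (-1:ℤ)^(v.val) := by
          rw [Finset.prod_univ_sum, Fintype.piFinset_univ]
      _ = ∏ i : Fin n, 1 := by
          refine Finset.prod_congr rfl fun i _ => ?_
          rw [Fin.sum_univ_eq_sum_range (fun j => (-1:ℤ)^j), neg_one_geom_sum,
            if_neg (by simpa [Nat.not_even_iff_odd] using hodd)]
      _ = 1 := Finset.prod_const_one
  have hpar : ∀ x : Fin n → Fin ℓ, (par x = 0 ↔ Even (∑ i, (x i).val)) := by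
    intro x
    rw [par_eq_cast_sum, ZMod.natCast_eq_zero_iff]
    exact ⟨fun h => (even_iff_two_dvd).2 h, fun h => (even_iff_two_dvd).1 h⟩
  have hsplit : ∑ x : Fin n → Fin ℓ, (-1:ℤ)^(∑ i, (x i).val) = (E:ℤ) - (O:ℤ) := by
    rw [← Finset.sum_filter_add_sum_filter_not Finset.univ (fun x => par x = 0)]
    have hA : ∑ x ∈ Finset.univ.filter (fun x : Fin n → Fin ℓ => par x = 0),
        (-1:ℤ)^(∑ i, (x i).val) = (E:ℤ) := by
      rw [Finset.sum_congr rfl (fun x hx => by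
        rw [Even.neg_one_pow ((hpar x).1 (Finset.mem_filter.1 hx).2)]),
        Finset.sum_const, hE]
      simp
    have hB : ∑ x ∈ Finset.univ.filter (fun x : Fin n → Fin ℓ => ¬ (par x = 0)),
        (-1:ℤ)^(∑ i, (x i).val) = -(O:ℤ) := by
      rw [Finset.sum_congr rfl (fun x hx => by
        rw [Odd.neg_one_pow (Nat.odd_iff.2 (Nat.not_even_iff.1 (fun he =>
          (Finset.mem_filter.1 hx).2 ((hpar x).2 he))))]),
        Finset.sum_const, hO]
      simp
    rw [hA, hB]
    ring
  have hfin : (E:ℤ) - (O:ℤ) = 1 := by rw [← hsplit, hsum]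
  clear hsum hpar hsplit hE hO
  clear_value E O
  generalize ℓ^n = q at hEO ⊢
  omega

lemma card_copy {ℓ : ℕ} [NeZero ℓ] (hl : 3 ≤ ℓ) {n : ℕ} {A : Set (Fin n → Fin ℓ)}
    (φ : (pathPower ℓ n).induce A ≃g (pathPower ℓ (3*ℓ)).induce (Set.range (gfun ℓ))) :
    ℓ ∣ Nat.card {x : Fin n → Fin ℓ // x ∈ A ∧ par x = 0} := by
  classical
  set S := Set.range (gfun ℓ) with hS
  have hconnS := gconn hl
  have hconnA : ((pathPower ℓ n).induce A).Connected := φ.connected_iff.mpr hconnS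
  set f : ↥A → ZMod 2 := fun a => par (a : Fin n → Fin ℓ) + par ((φ a : ↥S) : Fin (3*ℓ) → Fin ℓ)
    with hf
  have hstep : ∀ a b : ↥A, ((pathPower ℓ n).induce A).Adj a b → f a = f b := by
    intro a b hab
    have h1 : (pathPower ℓ n).Adj a.1 b.1 := hab
    have h2 : (pathPower ℓ (3*ℓ)).Adj (φ a).1 (φ b).1 := φ.map_rel_iff.mpr hab
    have p1 := par_adj h1
    have p2 := par_adj h2
    have : ∀ u v w z : ZMod 2, u + v = 1 → w + z = 1 → u + w = v + z := by decide
    exact this _ _ _ _ p1 p2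
  obtain ⟨a0⟩ := hconnA.nonempty
  set k := f a0 with hk0
  have hconst : ∀ a : ↥A, f a = k :=
    fun a => walk_const f hstep (hconnA.preconnected a a0)
  have hk : ∀ a : ↥A, par (a : Fin n → Fin ℓ) = par ((φ a : ↥S) : Fin (3*ℓ) → Fin ℓ) + k := by
    intro a
    have h := hconst a
    rw [hf] at h
    have : ∀ u v w : ZMod 2, u + v = w → u = v + w := by decide
    exact this _ _ _ h
  -- equivalences
  have e1 : {x : Fin n → Fin ℓ // x ∈ A ∧ par x = 0} ≃ {a : ↥A // par (a : Fin n → Fin ℓ) = 0} :=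
    ⟨fun x => ⟨⟨x.1, x.2.1⟩, x.2.2⟩, fun a => ⟨a.1.1, a.1.2, a.2⟩,
      fun _ => rfl, fun _ => rfl⟩
  have hc1 : ∀ u : ZMod 2, k + u = 0 → u = k := by
    rcases zmod2_cases k with h | h <;> rw [h] <;> decide
  have hkk0 : k + k = 0 := by
    rcases zmod2_cases k with h | h <;> rw [h] <;> decide
  have e2 : {a : ↥A // par (a : Fin n → Fin ℓ) = 0}
      ≃ {s : ↥S // par (s : Fin (3*ℓ) → Fin ℓ) = k} := by
    refine ⟨fun a => ⟨φ a.1, ?_⟩, fun s => ⟨φ.symm s.1, ?_⟩, fun a => ?_, fun s => ?_⟩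
    · have h := hk a.1
      rw [a.2] at h
      have h' : k + par ((φ a.1 : ↥S) : Fin (3*ℓ) → Fin ℓ) = 0 := by
        rw [add_comm]; exact h.symm
      exact hc1 _ h'
    · have h := hk (φ.symm s.1)
      rw [show φ (φ.symm s.1) = s.1 from φ.apply_symm_apply s.1, s.2] at h
      rw [h, hkk0]
    · exact Subtype.ext (φ.symm_apply_apply a.1)
    · exact Subtype.ext (φ.apply_symm_apply s.1)
  have e3 : {s : ↥S // par (s : Fin (3*ℓ) → Fin ℓ) = k}
      ≃ {a : Pidx ℓ // par (gfun ℓ a) = k} := by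
    refine ((Equiv.ofInjective (gfun ℓ) (gfun_injective hl)).subtypeEquiv ?_).symm
    intro a
    rfl
  rw [Nat.card_congr ((e1.trans e2).trans e3), Nat.card_eq_fintype_card,
    Fintype.card_subtype]
  rcases zmod2_cases k with h | h
  · rw [h]
    rw [card_par_zero hl]
  · rw [h, card_par_one hl]
    exact ⟨ℓ - 1, by rw [Nat.mul_sub]; simp⟩

theorem stmt_10 (ℓ : ℕ) (hodd : Odd ℓ) (hl : 3 ≤ ℓ) :
    ∃ m : ℕ, ∃ S : Set (Fin m → Fin ℓ), S.ncard = ℓ ^ 2 ∧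
      ∀ n : ℕ, ¬ ∃ P : Set (Set (Fin n → Fin ℓ)),
        (∀ A ∈ P, Nonempty ((pathPower ℓ n).induce A ≃g (pathPower ℓ m).induce S)) ∧
        (∀ x : Fin n → Fin ℓ, ∃! A, A ∈ P ∧ x ∈ A) := by
  classical
  haveI : NeZero ℓ := ⟨by omega⟩
  refine ⟨3*ℓ, Set.range (gfun ℓ), ?_, ?_⟩
  · rw [← Nat.card_coe_set_eq,
      Nat.card_congr (Equiv.ofInjective (gfun ℓ) (gfun_injective hl)).symm,
      Nat.card_eq_fintype_card, card_pidx hl, pow_two]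
  · rintro n ⟨P, hiso, huniq⟩
    have hP : P.Finite := Set.toFinite P
    have hdisj : ∀ A ∈ hP.toFinset, ∀ B ∈ hP.toFinset, A ≠ B →
        Disjoint (A.toFinite.toFinset.filter fun x => par x = 0)
          (B.toFinite.toFinset.filter fun x => par x = 0) := by
      intro A hA B hB hAB
      rw [Finset.disjoint_left]
      intro x hxA hxB
      simp only [Finset.mem_filter, Set.Finite.mem_toFinset] at hxA hxB
      exact hAB ((huniq x).unique ⟨(Set.Finite.mem_toFinset hP).1 hA, hxA.1⟩
        ⟨(Set.Finite.mem_toFinset hP).1 hB, hxB.1⟩)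
    have hcover : (Finset.univ.filter fun x : Fin n → Fin ℓ => par x = 0)
        = hP.toFinset.biUnion (fun A => A.toFinite.toFinset.filter fun x => par x = 0) := by
      ext x
      simp only [Finset.mem_filter, Finset.mem_univ, true_and, Finset.mem_biUnion,
        Set.Finite.mem_toFinset]
      constructor
      · intro hx
        obtain ⟨A, ⟨hAP, hxA⟩, _⟩ := huniq x
        exact ⟨A, hAP, hxA, hx⟩
      · rintro ⟨A, _, _, hx⟩
        exact hx
    have hdvd : ℓ ∣ (Finset.univ.filter fun x : Fin n → Fin ℓ => par x = 0).card := by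
      rw [hcover, Finset.card_biUnion hdisj]
      refine Finset.dvd_sum fun A hA => ?_
      obtain ⟨φ⟩ := hiso A ((Set.Finite.mem_toFinset hP).1 hA)
      have hd := card_copy hl φ
      have heq : Nat.card {x : Fin n → Fin ℓ // x ∈ A ∧ par x = 0}
          = (A.toFinite.toFinset.filter fun x => par x = 0).card := by
        rw [Nat.card_eq_fintype_card, Fintype.card_subtype]
        congr 1
        ext x
        simp [Set.Finite.mem_toFinset]
      rwa [heq] at hd
    have h2 := two_mul_card_evens hodd n
    have hdvd2 : ℓ ∣ ℓ^n + 1 := by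
      rw [← h2]
      exact Dvd.dvd.mul_left hdvd 2
    rcases n with _ | n
    · simp at hdvd2
      have := Nat.le_of_dvd (by omega) hdvd2
      omega
    · have hdp : ℓ ∣ ℓ^(n+1) := dvd_pow_self ℓ (Nat.succ_ne_zero n)
      have : ℓ ∣ 1 := (Nat.dvd_add_right hdp).mp hdvd2
      have := Nat.le_of_dvd (by omega) this
      omega
end

section
/- For every n, the edge set of the hypercube Q_n can be partitioned into antipodal paths, namely the paths (x_1, x_2, ..., x_n) → (1−x_1, x_2, ..., x_n) → (1−x_1, 1−x_2, ..., x_n) → ... → (1−x_1, ..., 1−x_n) taken over all x ∈ {0,1}^n with x_1 + ... + x_n even; consequently, whenever k divides n, E(Q_n) can be partitioned into paths with k edges. -/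
/-- The hypercube graph `Q_n`. -/
def hypercubeGraph (n : ℕ) : SimpleGraph (Fin n → ZMod 2) where
  Adj x y := hammingDist x y = 1
  symm := ⟨fun x y h => by rwa [hammingDist_comm]⟩
  loopless := ⟨fun x h => by simp only [hammingDist_self] at h; exact absurd h (by norm_num)⟩

/-- Flip the first `j` coordinates of `x`. -/
def flipPrefix (n : ℕ) (x : Fin n → ZMod 2) (j : ℕ) : Fin n → ZMod 2 :=
  fun i => if (i : ℕ) < j then x i + 1 else x i

lemma zmod2_add_one_ne : ∀ a : ZMod 2, a + 1 ≠ a := by decide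

lemma flip_apply (n : ℕ) (x : Fin n → ZMod 2) (j : ℕ) (i : Fin n) :
    flipPrefix n x j i = if (i : ℕ) < j then x i + 1 else x i := rfl

lemma flip_ne_iff (n : ℕ) (x : Fin n → ZMod 2) (a b : ℕ) (i : Fin n) :
    flipPrefix n x a i ≠ flipPrefix n x b i ↔ ((i:ℕ) < a ↔ ¬ (i:ℕ) < b) := by
  simp only [flip_apply]
  rcases lt_or_ge (i:ℕ) a with h | h <;> rcases lt_or_ge (i:ℕ) b with h' | h' <;>
    simp [h, h', not_lt.2, zmod2_add_one_ne, (zmod2_add_one_ne (x i)).symm] <;> omega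

lemma flip_adj {n : ℕ} (x : Fin n → ZMod 2) {a : ℕ} (h : a < n) :
    (hypercubeGraph n).Adj (flipPrefix n x a) (flipPrefix n x (a + 1)) := by
  show hammingDist _ _ = 1
  rw [hammingDist]
  rw [show ({i | flipPrefix n x a i ≠ flipPrefix n x (a+1) i} : Finset (Fin n)) = {⟨a, h⟩} from ?_]
  · simp
  · ext i
    simp only [Finset.mem_filter, Finset.mem_univ, true_and, Finset.mem_singleton,
      flip_ne_iff, Fin.ext_iff]
    omega

lemma flip_inj {n : ℕ} (x : Fin n → ZMod 2) {a b : ℕ} (ha : a ≤ n) (hb : b ≤ n)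
    (h : flipPrefix n x a = flipPrefix n x b) : a = b := by
  by_contra hne
  rcases Nat.lt_or_ge a b with hl | hl
  · have := congrFun h ⟨a, by omega⟩
    rw [flip_apply, flip_apply] at this
    simp only [lt_irrefl, if_neg (lt_irrefl a), if_pos (show a < b from hl)] at this
    exact zmod2_add_one_ne _ this.symm
  · have hl' : b < a := by omega
    have := congrFun h ⟨b, by omega⟩
    rw [flip_apply, flip_apply] at this
    simp only [if_pos (show b < a from hl'), if_neg (lt_irrefl b)] at this
    exact zmod2_add_one_ne _ this

lemma flipPrefix_flip_flip {n : ℕ} (x : Fin n → ZMod 2) (j : ℕ) :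
    flipPrefix n (flipPrefix n x j) j = x := by
  funext i
  simp only [flip_apply]
  split <;> [skip; rfl]
  rw [add_assoc, show ((1:ZMod 2)+1) = 0 from by decide, add_zero]

lemma zmod2_ne_iff : ∀ a b : ZMod 2, a ≠ b ↔ b = a + 1 := by decide
lemma zmod2_val_add_one : ∀ a : ZMod 2, a.val + (a+1).val = 1 := by decide

lemma diff_coord {n : ℕ} {u v : Fin n → ZMod 2} (h : (hypercubeGraph n).Adj u v) :
    ∃ j : Fin n, ∀ i : Fin n, u i ≠ v i ↔ i = j := by
  have h' : hammingDist u v = 1 := h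
  rw [hammingDist, Finset.card_eq_one] at h'
  obtain ⟨j, hj⟩ := h'
  refine ⟨j, fun i => ?_⟩
  have := Finset.ext_iff.1 hj i
  simpa using this

lemma flip_flip_succ {n : ℕ} {u v : Fin n → ZMod 2} (j : Fin n)
    (hd : ∀ i : Fin n, u i ≠ v i ↔ i = j) :
    flipPrefix n (flipPrefix n u (j:ℕ)) ((j:ℕ)+1) = v := by
  funext i
  simp only [flip_apply]
  rcases lt_trichotomy (i:ℕ) (j:ℕ) with hl | he | hg
  · rw [if_pos hl, if_pos (by omega), add_assoc,
      show ((1:ZMod 2)+1) = 0 from by decide, add_zero]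
    by_contra hne
    have hne' : (i:ℕ) ≠ (j:ℕ) := by omega
    exact hne' (Fin.ext_iff.1 ((hd i).1 hne))
  · rw [if_neg (show ¬((i:ℕ) < (j:ℕ)) by omega), if_pos (show (i:ℕ) < (j:ℕ)+1 by omega)]
    have : i = j := Fin.ext he
    subst this
    exact ((zmod2_ne_iff _ _).1 ((hd i).2 rfl)).symm
  · rw [if_neg (show ¬((i:ℕ) < (j:ℕ)) by omega), if_neg (show ¬((i:ℕ) < (j:ℕ)+1) by omega)]
    by_contra hne
    have hne' : (i:ℕ) ≠ (j:ℕ) := by omega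
    exact hne' (Fin.ext_iff.1 ((hd i).1 hne))

lemma parity_ne {n : ℕ} (u v : Fin n → ZMod 2) (j : Fin n)
    (hj : v j = u j + 1) (ho : ∀ i, i ≠ j → u i = v i) :
    Even (∑ i, (u i).val) ↔ ¬ Even (∑ i, (v i).val) := by
  rw [← Finset.add_sum_erase Finset.univ (fun i => (u i).val) (Finset.mem_univ j),
      ← Finset.add_sum_erase Finset.univ (fun i => (v i).val) (Finset.mem_univ j),
      Finset.sum_congr rfl (fun i hi => by
        rw [ho i (Finset.mem_erase.1 hi).1])]
  have := zmod2_val_add_one (u j)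
  rw [← hj] at this
  rcases Nat.le_one_iff_eq_zero_or_eq_one.1 (show (u j).val ≤ 1 from by omega) with h0 | h1
  · rw [h0, show (v j).val = 1 from by omega]
    simp [Nat.even_add, Nat.even_add_one]
  · rw [h1, show (v j).val = 0 from by omega]
    simp [Nat.even_add, Nat.even_add_one]

lemma part1 {n : ℕ} (u v : Fin n → ZMod 2) (h : (hypercubeGraph n).Adj u v) :
    ∃! p : (Fin n → ZMod 2) × Fin n,
      Even (∑ i, (p.1 i).val) ∧
      s(u,v) = s(flipPrefix n p.1 (p.2 : ℕ), flipPrefix n p.1 ((p.2 : ℕ) + 1)) := by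
  obtain ⟨j, hd⟩ := diff_coord h
  set x0 := flipPrefix n u (j:ℕ) with hx0
  set x1 := flipPrefix n v (j:ℕ) with hx1
  have h0a : flipPrefix n x0 (j:ℕ) = u := flipPrefix_flip_flip u (j:ℕ)
  have h0b : flipPrefix n x0 ((j:ℕ)+1) = v := flip_flip_succ j hd
  have h1a : flipPrefix n x1 (j:ℕ) = v := flipPrefix_flip_flip v (j:ℕ)
  have h1b : flipPrefix n x1 ((j:ℕ)+1) = u :=
    flip_flip_succ j (fun i => by rw [ne_comm]; exact hd i)
  -- x1 = x0 except at j, x1 j = x0 j + 1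
  have hx01 : x1 j = x0 j + 1 := by
    simp only [hx0, hx1, flip_apply, if_neg (lt_irrefl (j:ℕ))]
    exact (zmod2_ne_iff _ _).1 ((hd j).2 rfl)
  have hxo : ∀ i, i ≠ j → x0 i = x1 i := by
    intro i hi
    simp only [hx0, hx1, flip_apply]
    have : u i = v i := by by_contra hne; exact hi ((hd i).1 hne)
    split <;> rw [this]
  have hpar := parity_ne x0 x1 j hx01 hxo
  -- uniqueness helper
  have huniq : ∀ y : Fin n → ZMod 2, ∀ m : Fin n,
      s(u,v) = s(flipPrefix n y (m:ℕ), flipPrefix n y ((m:ℕ)+1)) →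
      (m = j ∧ (y = x0 ∨ y = x1)) := by
    intro y m he
    have hd' : ∀ i : Fin n, flipPrefix n y (m:ℕ) i ≠ flipPrefix n y ((m:ℕ)+1) i ↔ i = m := by
      intro i
      rw [flip_ne_iff, Fin.ext_iff]
      omega
    rw [Sym2.eq_iff] at he
    have hmj : m = j := by
      rcases he with ⟨he1, he2⟩ | ⟨he1, he2⟩
      · rw [he1, he2] at hd
        exact ((hd' j).1 ((hd j).2 rfl)).symm
      · have hvu : ∀ i : Fin n, v i ≠ u i ↔ i = j := fun i => by rw [ne_comm]; exact hd i
        rw [he1, he2] at hvu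
        exact ((hd' j).1 ((hvu j).2 rfl)).symm
    subst hmj
    refine ⟨rfl, ?_⟩
    rcases he with ⟨he1, he2⟩ | ⟨he1, he2⟩
    · left; rw [hx0, he1, flipPrefix_flip_flip]
    · right; rw [hx1, he2, flipPrefix_flip_flip]
  by_cases hev : Even (∑ i, (x0 i).val)
  · refine ⟨(x0, j), ⟨hev, by rw [h0a, h0b]⟩, ?_⟩
    rintro ⟨y, m⟩ ⟨hye, hyeq⟩
    obtain ⟨hm, hy⟩ := huniq y m hyeq
    rcases hy with hy | hy
    · simp [hy, hm]
    · subst hy; exact absurd hye (hpar.1 hev)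
  · have hev1 : Even (∑ i, (x1 i).val) := by
      by_contra hc; exact hev (hpar.2 hc)
    refine ⟨(x1, j), ⟨hev1, by rw [h1a, h1b, Sym2.eq_swap]⟩, ?_⟩
    rintro ⟨y, m⟩ ⟨hye, hyeq⟩
    obtain ⟨hm, hy⟩ := huniq y m hyeq
    rcases hy with hy | hy
    · subst hy; exact absurd hye hev
    · simp [hy, hm]

def seg {n : ℕ} (x : Fin n → ZMod 2) : (a k : ℕ) → a + k ≤ n →
    (hypercubeGraph n).Walk (flipPrefix n x a) (flipPrefix n x (a + k))
  | _, 0, _ => SimpleGraph.Walk.nil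
  | a, k+1, h => (seg x a k (by omega)).concat (flip_adj x (show a + k < n by omega))

lemma seg_length {n : ℕ} (x : Fin n → ZMod 2) (a k : ℕ) (h : a + k ≤ n) :
    (seg x a k h).length = k := by
  induction k with
  | zero => rfl
  | succ k ih => rw [seg, SimpleGraph.Walk.length_concat, ih]

lemma seg_support {n : ℕ} (x : Fin n → ZMod 2) (a k : ℕ) (h : a + k ≤ n) :
    (seg x a k h).support = (List.range (k+1)).map (fun i => flipPrefix n x (a + i)) := by
  induction k with
  | zero => simp [seg, List.range_succ]
  | succ k ih =>
    rw [seg, SimpleGraph.Walk.support_concat, ih (by omega)]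
    rw [List.range_succ (n := k+1), List.map_append]
    simp

lemma seg_edges {n : ℕ} (x : Fin n → ZMod 2) (a k : ℕ) (h : a + k ≤ n) :
    (seg x a k h).edges =
      (List.range k).map (fun i => s(flipPrefix n x (a + i), flipPrefix n x (a + i + 1))) := by
  induction k with
  | zero => simp [seg]
  | succ k ih =>
    rw [seg, SimpleGraph.Walk.edges_concat, ih (by omega)]
    rw [List.range_succ (n := k), List.map_append, List.concat_eq_append]
    simp only [List.map_cons, List.map_nil, List.append_cancel_left_eq]
    rw [show a + (k+1) = a + k + 1 from rfl]

lemma seg_isPath {n : ℕ} (x : Fin n → ZMod 2) (a k : ℕ) (h : a + k ≤ n) :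
    (seg x a k h).IsPath := by
  rw [SimpleGraph.Walk.isPath_def, seg_support]
  refine List.Nodup.map_on ?_ List.nodup_range
  intro i hi j hj hij
  rw [List.mem_range] at hi hj
  have := flip_inj x (show a + i ≤ n by omega) (show a + j ≤ n by omega) hij
  omega

theorem stmt_12 (n : ℕ) :
    (∀ e ∈ (hypercubeGraph n).edgeSet,
      ∃! p : (Fin n → ZMod 2) × Fin n,
        Even (∑ i, (p.1 i).val) ∧
        e = s(flipPrefix n p.1 (p.2 : ℕ), flipPrefix n p.1 ((p.2 : ℕ) + 1))) ∧
    (∀ k : ℕ, 0 < k → k ∣ n →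
      ∃ P : Set ((u : Fin n → ZMod 2) × (v : Fin n → ZMod 2) ×
          (hypercubeGraph n).Walk u v),
        (∀ p ∈ P, p.2.2.IsPath ∧ p.2.2.length = k) ∧
        ∀ e ∈ (hypercubeGraph n).edgeSet, ∃! p, p ∈ P ∧ e ∈ p.2.2.edges) := by
  constructor
  · intro e he
    induction e using Sym2.ind with
    | _ u v => exact part1 u v (((hypercubeGraph n).mem_edgeSet).1 he)
  · intro k hk hdvd
    have hseg : ∀ m : Fin (n / k), (m : ℕ) * k + k ≤ n := by
      intro m
      have h1 : ((m : ℕ) + 1) * k ≤ (n / k) * k :=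
        Nat.mul_le_mul_right k (Nat.succ_le_of_lt m.isLt)
      rw [Nat.div_mul_cancel hdvd] at h1
      calc (m : ℕ) * k + k = ((m : ℕ) + 1) * k := by ring
        _ ≤ n := h1
    refine ⟨{p | ∃ x : Fin n → ZMod 2, ∃ m : Fin (n / k),
        Even (∑ i, (x i).val) ∧
        p = ⟨_, _, seg x ((m : ℕ) * k) k (hseg m)⟩}, ?_, ?_⟩
    · rintro p ⟨x, m, -, rfl⟩
      exact ⟨seg_isPath _ _ _ _, seg_length _ _ _ _⟩
    · intro e he
      induction e using Sym2.ind with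
      | _ u v =>
        obtain ⟨⟨x, j⟩, ⟨hev, heq⟩, hun⟩ := part1 u v (((hypercubeGraph n).mem_edgeSet).1 he)
        simp only at hev heq
        have hjn : (j : ℕ) < n := j.isLt
        have hmlt : (j : ℕ) / k < n / k := Nat.div_lt_div_of_lt_of_dvd hdvd hjn
        have hjdm : ((j : ℕ) / k) * k + (j : ℕ) % k = (j : ℕ) := by
          rw [mul_comm]; exact Nat.div_add_mod _ _
        have hmod : (j : ℕ) % k < k := Nat.mod_lt _ hk
        set m : Fin (n / k) := ⟨(j : ℕ) / k, hmlt⟩ with hm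
        refine ⟨⟨_, _, seg x ((m : ℕ) * k) k (hseg m)⟩, ⟨⟨x, m, hev, rfl⟩, ?_⟩, ?_⟩
        · rw [seg_edges, List.mem_map]
          exact ⟨(j : ℕ) % k, List.mem_range.2 hmod, by rw [hjdm, heq]⟩
        · rintro p ⟨⟨x', m', hev', rfl⟩, hemem⟩
          rw [seg_edges, List.mem_map] at hemem
          obtain ⟨i', hi', heq'⟩ := hemem
          rw [List.mem_range] at hi'
          have hlt : (m' : ℕ) * k + i' < n := by
            have := hseg m'; omega
          have hpair := hun (x', ⟨(m' : ℕ) * k + i', hlt⟩) ⟨hev', heq'.symm⟩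
          have hx : x' = x := congrArg Prod.fst hpair
          have hjm : (m' : ℕ) * k + i' = (j : ℕ) := by
            have := congrArg (fun q : (Fin n → ZMod 2) × Fin n => ((q.2 : Fin n) : ℕ)) hpair
            simpa using this
          have hmm : m' = m := by
            apply Fin.ext
            have : ((m' : ℕ) * k + i') / k = (m' : ℕ) := by
              rw [mul_comm, Nat.mul_add_div hk, Nat.div_eq_of_lt hi', add_zero]
            rw [hjm] at this
            rw [hm, ← this]
          subst hx
          subst hmm
          rfl
end
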